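/- Let p ≥ 1, m ≥ 1, n = p + m, and write points of ℝⁿ as x = (x₀, v) with x₀ ∈ ℝᵖ, v ∈ ℝᵐ, and points of the dual as ξ = (ξ₁, ξ₂). Let g be the linear transformation of ℝⁿ acting as the identity on the ℝᵖ-factor and as g′ on the ℝᵐ-factor, where g′ − 1 is invertible. Then for every Schwartz function h ∈ 𝒮(ℝⁿ×ℝⁿ; ℂ): lim_{ℏ → 0⁺} ℏ^{−m} ∫_{ℝⁿ} ĥ(x, (gx − x)/ℏ) dx = ((2π)ᵐ / |det(g′ − 1)|) · ∫_{ℝᵖ} ∫_{ℝᵖ} h((x₀, 0), (ξ₁, 0)) dξ₁ dx₀, where ĥ(x,y) = ∫_{ℝⁿ} h(x,ξ) e^{−i⟨y,ξ⟩} dξ is the Fourier transform of h in the second variable. -/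

import Mathlib

open MeasureTheory RealInnerProductSpace Filter

/-- Fourier transform in the second variable, on the product space
`ℝⁿ = ℝᵖ × ℝᵐ` (with the inner product `⟨y,ξ⟩ = ⟨y₁,ξ₁⟩ + ⟨y₂,ξ₂⟩`):
`ĥ(x,y) = ∫ h(x,ξ) e^{−i⟨y,ξ⟩} dξ`. -/
noncomputable def fhat2 (p m : ℕ)
    (h : (EuclideanSpace ℝ (Fin p) × EuclideanSpace ℝ (Fin m)) ×
         (EuclideanSpace ℝ (Fin p) × EuclideanSpace ℝ (Fin m)) → ℂ)
    (x y : EuclideanSpace ℝ (Fin p) × EuclideanSpace ℝ (Fin m)) : ℂ :=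
  ∫ ξ : EuclideanSpace ℝ (Fin p) × EuclideanSpace ℝ (Fin m),
    h (x, ξ) * Complex.exp (-(Complex.I * ((⟪y.1, ξ.1⟫ + ⟪y.2, ξ.2⟫ : ℝ) : ℂ)))

namespace Statement9Aux

open Real

noncomputable section

abbrev Eu (d : ℕ) := EuclideanSpace ℝ (Fin d)

section Shift

variable {E F : Type*} [NormedAddCommGroup E] [NormedSpace ℝ E]
  [NormedAddCommGroup F] [NormedSpace ℝ F]

theorem fderiv_comp_const_add (f : E → F) (c z : E) :
    fderiv ℝ (fun w => f (c + w)) z = fderiv ℝ f (c + z) := by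
  by_cases hf : DifferentiableAt ℝ f (c + z)
  · have h1 : HasFDerivAt (fun w : E => c + w) (ContinuousLinearMap.id ℝ E) z := by
      simpa using (hasFDerivAt_id z).const_add c
    have := (hf.hasFDerivAt.comp z h1).fderiv
    simpa [Function.comp_def] using this
  · have hf' : ¬ DifferentiableAt ℝ (fun w => f (c + w)) z := by
      intro hcomp
      apply hf
      have h2 : DifferentiableAt ℝ (fun w : E => w - c) (c + z) :=
        (differentiable_id.sub_const c) _
      have h3 : DifferentiableAt ℝ ((fun w => f (c + w)) ∘ (fun w : E => w - c)) (c + z) := by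
        apply DifferentiableAt.comp
        · simpa using hcomp
        · exact h2
      have h4 : ((fun w => f (c + w)) ∘ (fun w : E => w - c)) = f := by
        funext w; simp [Function.comp]
      rwa [h4] at h3
    rw [fderiv_zero_of_not_differentiableAt hf, fderiv_zero_of_not_differentiableAt hf']

theorem iteratedFDeriv_comp_const_add (n : ℕ) (f : E → F) (c : E) :
    (fun z => iteratedFDeriv ℝ n (fun w => f (c + w)) z)
      = fun z => iteratedFDeriv ℝ n f (c + z) := by
  induction n with
  | zero => funext z; ext1 v; simp
  | succ n ih =>
    funext z
    rw [iteratedFDeriv_succ_eq_comp_left, iteratedFDeriv_succ_eq_comp_left]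
    simp only [Function.comp_apply]
    congr 1
    have h1 : (iteratedFDeriv ℝ n fun w => f (c + w))
        = fun w => iteratedFDeriv ℝ n f (c + w) := ih
    rw [h1, fderiv_comp_const_add]

end Shift

/-- Integrability of `(1+‖x‖)^{-(d+1)}` on `ℝ^d`. -/
theorem intOneAdd (d : ℕ) :
    Integrable (fun x : Eu d => ((1 + ‖x‖) ^ (d + 1))⁻¹) := by
  have h := integrable_one_add_norm (E := Eu d)
    (μ := volume) (r := ((d + 1 : ℕ) : ℝ)) (by simp [finrank_euclideanSpace_fin])
  apply h.congr
  filter_upwards with x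
  rw [Real.rpow_neg (by positivity), Real.rpow_natCast]

/-- Kernel identity: our convention vs Mathlib's Fourier integral. -/
theorem kernel_eq {d : ℕ} (f : Eu d → ℂ) (u : Eu d) :
    (∫ s, f s * Complex.exp (-(Complex.I * ((⟪u, s⟫ : ℝ) : ℂ))))
      = FourierTransform.fourier f ((2 * π)⁻¹ • u) := by
  rw [Real.fourier_eq]
  congr 1
  funext s
  rw [Circle.smul_def, Real.fourierChar_apply]
  rw [real_inner_smul_right]
  have h2π : (2 * π) ≠ 0 := by positivity
  have : 2 * π * -((2 * π)⁻¹ * ⟪s, u⟫) = -⟪u, s⟫ := by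
    rw [real_inner_comm]; field_simp
  rw [this]
  rw [mul_comm]
  congr 1
  push_cast
  ring

theorem one_add_pow_le (a : ℝ) (ha : 0 ≤ a) (k : ℕ) :
    (1 + a) ^ k ≤ 2 ^ k * (1 + a ^ k) := by
  rcases le_total a 1 with hle | hle
  · have h1 : (1 + a) ^ k ≤ 2 ^ k := pow_le_pow_left₀ (by positivity) (by linarith) k
    have h2 : (0:ℝ) ≤ a ^ k := by positivity
    nlinarith [pow_pos (show (0:ℝ) < 2 by norm_num) k]
  · have h1 : (1 + a) ^ k ≤ (2 * a) ^ k := pow_le_pow_left₀ (by positivity) (by linarith) k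
    rw [mul_pow] at h1
    nlinarith [pow_pos (show (0:ℝ) < 2 by norm_num) k]

variable {p m : ℕ} (h : SchwartzMap ((Eu p × Eu m) × (Eu p × Eu m)) ℂ)

/-- Pointwise iterated-derivative bound for slices in the last variable. -/
theorem slice_deriv_bound (x : Eu p × Eu m) (ξ₁ : Eu p) (j : ℕ) (t : Eu m) :
    ‖iteratedFDeriv ℝ j (fun s : Eu m => h (x, (ξ₁, s))) t‖
      ≤ ‖iteratedFDeriv ℝ j (⇑h) (x, (ξ₁, t))‖ := by
  set Z := (Eu p × Eu m) × (Eu p × Eu m)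
  set L : Eu m →L[ℝ] Z :=
    (0 : Eu m →L[ℝ] Eu p × Eu m).prod (ContinuousLinearMap.inr ℝ (Eu p) (Eu m)) with hL
  set c : Z := (x, (ξ₁, 0)) with hc
  have hcL : ∀ s : Eu m, c + L s = (x, (ξ₁, s)) := by
    intro s
    show (x, (ξ₁, (0 : Eu m))) + ((0 : Eu p × Eu m), ((0 : Eu p), s)) = (x, (ξ₁, s))
    simp [Prod.ext_iff]
  have hfun : (fun s : Eu m => h (x, (ξ₁, s))) = (fun w : Z => h (c + w)) ∘ L := by
    funext s; simp [Function.comp, hcL s]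
  have hA : ContDiff ℝ ((⊤ : ℕ∞) : WithTop ℕ∞) (fun w : Z => c + w) :=
    contDiff_const.add contDiff_id
  have hsm : ContDiff ℝ (↑j) (fun w : Z => h (c + w)) :=
    ((h.smooth ⊤).comp hA).of_le (by exact_mod_cast le_top)
  have hLnorm : ‖L‖ ≤ 1 := by
    apply ContinuousLinearMap.opNorm_le_bound _ zero_le_one
    intro s
    have : ‖L s‖ = ‖s‖ := by
      show ‖((0 : Eu p × Eu m), ((0 : Eu p), s))‖ = ‖s‖
      have h0 : (0:ℝ) ⊔ ‖s‖ = ‖s‖ := sup_eq_right.2 (norm_nonneg s)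
      simp [Prod.norm_def, norm_zero, h0]
    rw [this, one_mul]
  rw [hfun, L.iteratedFDeriv_comp_right hsm t le_rfl]
  calc ‖(iteratedFDeriv ℝ j (fun w : Z => h (c + w)) (L t)).compContinuousLinearMap fun _ => L‖
      ≤ ‖iteratedFDeriv ℝ j (fun w : Z => h (c + w)) (L t)‖ * ∏ _i : Fin j, ‖L‖ :=
        ContinuousMultilinearMap.norm_compContinuousLinearMap_le _ _
    _ ≤ ‖iteratedFDeriv ℝ j (fun w : Z => h (c + w)) (L t)‖ * 1 := by
        apply mul_le_mul_of_nonneg_left _ (norm_nonneg _)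
        exact Finset.prod_le_one (fun _ _ => norm_nonneg _) (fun _ _ => hLnorm)
    _ = ‖iteratedFDeriv ℝ j (⇑h) (c + L t)‖ := by
        rw [mul_one, congrFun (iteratedFDeriv_comp_const_add j (⇑h) c) (L t)]
    _ = ‖iteratedFDeriv ℝ j (⇑h) (x, (ξ₁, t))‖ := by rw [hcL t]

/-- Trifactor decay bound from the Schwartz property. -/
theorem trifactor : ∃ C : ℝ, 0 ≤ C ∧ ∀ j, j ≤ m + 1 → ∀ (x : Eu p × Eu m) (ξ₁ : Eu p) (t : Eu m),
    ‖iteratedFDeriv ℝ j (⇑h) (x, (ξ₁, t))‖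
      ≤ C * ((1 + ‖x.1‖) ^ (p + 1))⁻¹ * ((1 + ‖ξ₁‖) ^ (p + 1))⁻¹ * ((1 + ‖t‖) ^ (m + 1))⁻¹ := by
  set k₀ : ℕ := (p + 1) + (p + 1) + (m + 1) with hk₀
  set C : ℝ := 2 ^ k₀ *
    ((Finset.Iic (k₀, m + 1)).sup fun mm => SchwartzMap.seminorm ℝ mm.1 mm.2) h with hC
  have hC0 : 0 ≤ C := by positivity
  refine ⟨C, hC0, ?_⟩
  intro j hj x ξ₁ t
  set z : (Eu p × Eu m) × (Eu p × Eu m) := (x, (ξ₁, t)) with hz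
  have key : (1 + ‖z‖) ^ k₀ * ‖iteratedFDeriv ℝ j (⇑h) z‖ ≤ C :=
    SchwartzMap.one_add_le_sup_seminorm_apply (m := (k₀, m + 1)) le_rfl hj h z
  have h1 : ‖x.1‖ ≤ ‖z‖ := le_trans (norm_fst_le x) (norm_fst_le z)
  have h2 : ‖ξ₁‖ ≤ ‖z‖ := le_trans (norm_fst_le (ξ₁, t)) (norm_snd_le z)
  have h3 : ‖t‖ ≤ ‖z‖ := le_trans (norm_snd_le (ξ₁, t)) (norm_snd_le z)
  have hfac : (1 + ‖x.1‖) ^ (p + 1) * (1 + ‖ξ₁‖) ^ (p + 1) * (1 + ‖t‖) ^ (m + 1)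
      ≤ (1 + ‖z‖) ^ k₀ := by
    have e1 : (1 + ‖x.1‖) ^ (p + 1) ≤ (1 + ‖z‖) ^ (p + 1) :=
      pow_le_pow_left₀ (by positivity) (by linarith) _
    have e2 : (1 + ‖ξ₁‖) ^ (p + 1) ≤ (1 + ‖z‖) ^ (p + 1) :=
      pow_le_pow_left₀ (by positivity) (by linarith) _
    have e3 : (1 + ‖t‖) ^ (m + 1) ≤ (1 + ‖z‖) ^ (m + 1) :=
      pow_le_pow_left₀ (by positivity) (by linarith) _
    calc (1 + ‖x.1‖) ^ (p + 1) * (1 + ‖ξ₁‖) ^ (p + 1) * (1 + ‖t‖) ^ (m + 1)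
        ≤ (1 + ‖z‖) ^ (p + 1) * (1 + ‖z‖) ^ (p + 1) * (1 + ‖z‖) ^ (m + 1) :=
          mul_le_mul (mul_le_mul e1 e2 (by positivity) (by positivity)) e3
            (by positivity) (by positivity)
      _ = (1 + ‖z‖) ^ k₀ := by rw [hk₀, pow_add, pow_add]; ring
  have hD : 0 ≤ ‖iteratedFDeriv ℝ j (⇑h) z‖ := norm_nonneg _
  have step : (1 + ‖x.1‖) ^ (p + 1) * (1 + ‖ξ₁‖) ^ (p + 1) * (1 + ‖t‖) ^ (m + 1)
      * ‖iteratedFDeriv ℝ j (⇑h) z‖ ≤ C :=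
    le_trans (mul_le_mul_of_nonneg_right hfac hD) key
  have hpos : (0:ℝ) < (1 + ‖x.1‖) ^ (p + 1) * (1 + ‖ξ₁‖) ^ (p + 1) * (1 + ‖t‖) ^ (m + 1) := by
    positivity
  have : ‖iteratedFDeriv ℝ j (⇑h) z‖
      ≤ C / ((1 + ‖x.1‖) ^ (p + 1) * (1 + ‖ξ₁‖) ^ (p + 1) * (1 + ‖t‖) ^ (m + 1)) := by
    rw [le_div_iff₀ hpos]
    calc ‖iteratedFDeriv ℝ j (⇑h) z‖
          * ((1 + ‖x.1‖) ^ (p + 1) * (1 + ‖ξ₁‖) ^ (p + 1) * (1 + ‖t‖) ^ (m + 1))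
        = (1 + ‖x.1‖) ^ (p + 1) * (1 + ‖ξ₁‖) ^ (p + 1) * (1 + ‖t‖) ^ (m + 1)
          * ‖iteratedFDeriv ℝ j (⇑h) z‖ := by ring
      _ ≤ C := step
  calc ‖iteratedFDeriv ℝ j (⇑h) z‖
      ≤ C / ((1 + ‖x.1‖) ^ (p + 1) * (1 + ‖ξ₁‖) ^ (p + 1) * (1 + ‖t‖) ^ (m + 1)) := this
    _ = C * ((1 + ‖x.1‖) ^ (p + 1))⁻¹ * ((1 + ‖ξ₁‖) ^ (p + 1))⁻¹ * ((1 + ‖t‖) ^ (m + 1))⁻¹ := by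
        field_simp

/-- Key decay bound for the partial Fourier transform in the last variable. -/
theorem inner_decay : ∃ D : ℝ, 0 ≤ D ∧ ∀ (x : Eu p × Eu m) (ξ₁ : Eu p) (u : Eu m),
    ‖∫ s : Eu m, h (x, (ξ₁, s)) * Complex.exp (-(Complex.I * ((⟪u, s⟫ : ℝ) : ℂ)))‖
      ≤ D * ((1 + ‖x.1‖) ^ (p + 1))⁻¹ * ((1 + ‖ξ₁‖) ^ (p + 1))⁻¹ * ((1 + ‖u‖) ^ (m + 1))⁻¹ := by
  obtain ⟨C, hC0, hC⟩ := trifactor h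
  set cm : ℝ := ∫ t : Eu m, ((1 + ‖t‖) ^ (m + 1))⁻¹ with hcm
  have hcm0 : 0 ≤ cm := integral_nonneg fun t => by positivity
  set E : ℝ := 2 ^ (m + 1) * cm * (1 + (2 * π) ^ (m + 1) * (2 ^ (m + 1) * ((m + 2) : ℝ))) with hE
  have hE0 : 0 ≤ E := by positivity
  refine ⟨C * E, by positivity, ?_⟩
  intro x ξ₁ u
  set α : ℝ := ((1 + ‖x.1‖) ^ (p + 1))⁻¹ with hα
  set β : ℝ := ((1 + ‖ξ₁‖) ^ (p + 1))⁻¹ with hβ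
  set κ : ℝ := C * α * β with hκ
  have hα0 : 0 ≤ α := by positivity
  have hβ0 : 0 ≤ β := by positivity
  have hκ0 : 0 ≤ κ := by positivity
  set f : Eu m → ℂ := fun s => h (x, (ξ₁, s)) with hf
  have hfc : ContDiff ℝ ((((m + 1 : ℕ) : ℕ∞)) : WithTop ℕ∞) f := by
    have hA : ContDiff ℝ ((⊤ : ℕ∞) : WithTop ℕ∞)
        (fun s : Eu m => ((x, (ξ₁, s)) : (Eu p × Eu m) × (Eu p × Eu m))) :=
      contDiff_const.prodMk (contDiff_const.prodMk contDiff_id)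
    exact ((h.smooth ⊤).comp hA).of_le (by exact_mod_cast le_top)
  have hd : ∀ j, j ≤ m + 1 → ∀ t : Eu m,
      ‖iteratedFDeriv ℝ j f t‖ ≤ κ * ((1 + ‖t‖) ^ (m + 1))⁻¹ := by
    intro j hj t
    calc ‖iteratedFDeriv ℝ j f t‖ ≤ ‖iteratedFDeriv ℝ j (⇑h) (x, (ξ₁, t))‖ :=
          slice_deriv_bound h x ξ₁ j t
      _ ≤ C * α * β * ((1 + ‖t‖) ^ (m + 1))⁻¹ := hC j hj x ξ₁ t
  have hcont : ∀ j, j ≤ m + 1 → Continuous (iteratedFDeriv ℝ j f) := by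
    intro j hj
    exact hfc.continuous_iteratedFDeriv (by exact_mod_cast hj)
  have hInt : ∀ (k n : ℕ), (k : ℕ∞) ≤ (0 : ℕ∞) → (n : ℕ∞) ≤ ((m + 1 : ℕ) : ℕ∞) →
      Integrable (fun v : Eu m => ‖v‖ ^ k * ‖iteratedFDeriv ℝ n f v‖) := by
    intro k n hk hn
    have hk0 : k = 0 := by exact_mod_cast le_antisymm hk zero_le
    have hn' : n ≤ m + 1 := by exact_mod_cast hn
    subst hk0
    simp only [pow_zero, one_mul]
    apply Integrable.mono' ((intOneAdd m).const_mul κ)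
    · exact ((hcont n hn').norm).aestronglyMeasurable
    · filter_upwards with t
      simpa using hd n hn' t
  have hIb : ∀ n, n ≤ m + 1 →
      (∫ v : Eu m, ‖v‖ ^ 0 * ‖iteratedFDeriv ℝ n f v‖) ≤ κ * cm := by
    intro n hn
    have h1 : (∫ v : Eu m, ‖v‖ ^ 0 * ‖iteratedFDeriv ℝ n f v‖)
        ≤ ∫ v : Eu m, κ * ((1 + ‖v‖) ^ (m + 1))⁻¹ := by
      apply integral_mono (by simpa using hInt 0 n (by simp) (by exact_mod_cast hn))
        ((intOneAdd m).const_mul κ)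
      intro t
      simpa using hd n hn t
    rw [integral_const_mul] at h1
    exact h1
  have key : ∀ w : Eu m, ‖w‖ ^ (m + 1) * ‖FourierTransform.fourier f w‖ ≤
      (2 * π) ^ 0 * (2 * (0:ℕ) + 2) ^ (m + 1) *
        ∑ q ∈ Finset.range (0 + 1) ×ˢ Finset.range (m + 1 + 1),
          ∫ v : Eu m, ‖v‖ ^ q.1 * ‖iteratedFDeriv ℝ q.2 f v‖ := by
    intro w
    have := Real.pow_mul_norm_iteratedFDeriv_fourier_le (K := 0)
      (N := ((m + 1 : ℕ) : ℕ∞)) hfc hInt (k := 0) (n := m + 1) le_rfl le_rfl w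
    simpa [norm_iteratedFDeriv_zero] using this
  have hsum : (∑ q ∈ Finset.range (0 + 1) ×ˢ Finset.range (m + 1 + 1),
      ∫ v : Eu m, ‖v‖ ^ q.1 * ‖iteratedFDeriv ℝ q.2 f v‖) ≤ ((m + 2 : ℕ) : ℝ) * (κ * cm) := by
    have hcard : (Finset.range (0 + 1) ×ˢ Finset.range (m + 1 + 1)).card = m + 2 := by
      simp
    calc (∑ q ∈ Finset.range (0 + 1) ×ˢ Finset.range (m + 1 + 1),
        ∫ v : Eu m, ‖v‖ ^ q.1 * ‖iteratedFDeriv ℝ q.2 f v‖)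
        ≤ ∑ _q ∈ Finset.range (0 + 1) ×ˢ Finset.range (m + 1 + 1), (κ * cm) := by
          apply Finset.sum_le_sum
          intro q hq
          rcases Finset.mem_product.1 hq with ⟨hq1, hq2⟩
          have hq10 : q.1 = 0 := by simpa using Finset.mem_range.1 hq1
          have hq2' : q.2 ≤ m + 1 := Nat.lt_succ_iff.1 (Finset.mem_range.1 hq2)
          rw [hq10]
          exact hIb q.2 hq2'
      _ = ((m + 2 : ℕ) : ℝ) * (κ * cm) := by
          rw [Finset.sum_const, hcard, nsmul_eq_mul]
  have h0 : ∀ w : Eu m, ‖FourierTransform.fourier f w‖ ≤ κ * cm := by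
    intro w
    calc ‖FourierTransform.fourier f w‖ ≤ ∫ v : Eu m, ‖f v‖ :=
        VectorFourier.norm_fourierIntegral_le_integral_norm _ _ _ _ _
      _ = ∫ v : Eu m, ‖v‖ ^ 0 * ‖iteratedFDeriv ℝ 0 f v‖ := by
          simp [norm_iteratedFDeriv_zero]
      _ ≤ κ * cm := hIb 0 (by omega)
  have h1 : ∀ w : Eu m, ‖w‖ ^ (m + 1) * ‖FourierTransform.fourier f w‖ ≤
      2 ^ (m + 1) * (((m + 2 : ℕ) : ℝ) * (κ * cm)) := by
    intro w
    calc ‖w‖ ^ (m + 1) * ‖FourierTransform.fourier f w‖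
        ≤ (2 * π) ^ 0 * (2 * (0:ℕ) + 2) ^ (m + 1) *
          ∑ q ∈ Finset.range (0 + 1) ×ˢ Finset.range (m + 1 + 1),
            ∫ v : Eu m, ‖v‖ ^ q.1 * ‖iteratedFDeriv ℝ q.2 f v‖ := key w
      _ = 2 ^ (m + 1) * ∑ q ∈ Finset.range (0 + 1) ×ˢ Finset.range (m + 1 + 1),
            ∫ v : Eu m, ‖v‖ ^ q.1 * ‖iteratedFDeriv ℝ q.2 f v‖ := by norm_num
      _ ≤ 2 ^ (m + 1) * (((m + 2 : ℕ) : ℝ) * (κ * cm)) := by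
          apply mul_le_mul_of_nonneg_left hsum (by positivity)
  set w₀ : Eu m := (2 * π)⁻¹ • u with hw₀
  have h2π : (0:ℝ) < 2 * π := by positivity
  have hwnorm : ‖u‖ = (2 * π) * ‖w₀‖ := by
    rw [hw₀, norm_smul, Real.norm_eq_abs, abs_inv, abs_of_pos h2π]
    field_simp
  have hγpos : (0:ℝ) < (1 + ‖u‖) ^ (m + 1) := by positivity
  have main : (1 + ‖u‖) ^ (m + 1) * ‖FourierTransform.fourier f w₀‖ ≤ κ * E := by
    calc (1 + ‖u‖) ^ (m + 1) * ‖FourierTransform.fourier f w₀‖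
        ≤ (2 ^ (m + 1) * (1 + ‖u‖ ^ (m + 1))) * ‖FourierTransform.fourier f w₀‖ := by
          apply mul_le_mul_of_nonneg_right (one_add_pow_le ‖u‖ (norm_nonneg u) (m + 1))
            (norm_nonneg _)
      _ = 2 ^ (m + 1) * (‖FourierTransform.fourier f w₀‖
            + ‖u‖ ^ (m + 1) * ‖FourierTransform.fourier f w₀‖) := by ring
      _ ≤ 2 ^ (m + 1) * (κ * cm
            + (2 * π) ^ (m + 1) * (2 ^ (m + 1) * (((m + 2 : ℕ) : ℝ) * (κ * cm)))) := by
          apply mul_le_mul_of_nonneg_left _ (by positivity)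
          apply add_le_add (h0 w₀)
          rw [hwnorm, mul_pow, mul_assoc]
          apply mul_le_mul_of_nonneg_left (h1 w₀) (by positivity)
      _ ≤ κ * E := by
          rw [hE]
          push_cast
          nlinarith [hκ0, hcm0, mul_nonneg hκ0 hcm0]
  rw [kernel_eq f u]
  rw [← hw₀]
  calc ‖FourierTransform.fourier f w₀‖
      ≤ (κ * E) / ((1 + ‖u‖) ^ (m + 1)) := by
        rw [le_div_iff₀ hγpos]
        calc ‖FourierTransform.fourier f w₀‖ * (1 + ‖u‖) ^ (m + 1)
            = (1 + ‖u‖) ^ (m + 1) * ‖FourierTransform.fourier f w₀‖ := by ring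
          _ ≤ κ * E := main
    _ = C * E * α * β * ((1 + ‖u‖) ^ (m + 1))⁻¹ := by rw [hκ]; ring

/-- Pointwise bound on `h` itself, uniform in the first slot. -/
theorem h_bound : ∃ C : ℝ, 0 ≤ C ∧ ∀ (x : Eu p × Eu m) (ξ : Eu p × Eu m),
    ‖h (x, ξ)‖ ≤ C * (((1 + ‖ξ.1‖) ^ (p + 1))⁻¹ * ((1 + ‖ξ.2‖) ^ (m + 1))⁻¹) := by
  obtain ⟨C, hC0, hC⟩ := trifactor h
  refine ⟨C, hC0, ?_⟩
  intro x ξ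
  have h1 := hC 0 (by omega) x ξ.1 ξ.2
  rw [norm_iteratedFDeriv_zero] at h1
  have hα1 : ((1 + ‖x.1‖) ^ (p + 1))⁻¹ ≤ 1 := by
    rw [inv_le_one_iff₀]
    right
    exact one_le_pow₀ (by linarith [norm_nonneg x.1])
  calc ‖h (x, (ξ.1, ξ.2))‖
      ≤ C * ((1 + ‖x.1‖) ^ (p + 1))⁻¹ * ((1 + ‖ξ.1‖) ^ (p + 1))⁻¹ * ((1 + ‖ξ.2‖) ^ (m + 1))⁻¹ := h1
    _ ≤ C * 1 * ((1 + ‖ξ.1‖) ^ (p + 1))⁻¹ * ((1 + ‖ξ.2‖) ^ (m + 1))⁻¹ := by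
        gcongr
    _ = C * (((1 + ‖ξ.1‖) ^ (p + 1))⁻¹ * ((1 + ‖ξ.2‖) ^ (m + 1))⁻¹) := by ring

theorem prod_bound_integrable (c : ℝ) : Integrable (fun ξ : Eu p × Eu m =>
    c * (((1 + ‖ξ.1‖) ^ (p + 1))⁻¹ * ((1 + ‖ξ.2‖) ^ (m + 1))⁻¹)) := by
  rw [MeasureTheory.Measure.volume_eq_prod]
  exact ((intOneAdd p).mul_prod (intOneAdd m)).const_mul c

theorem slice_integrable (x : Eu p × Eu m) :
    Integrable (fun ξ : Eu p × Eu m => h (x, ξ)) := by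
  obtain ⟨C, hC0, hC⟩ := h_bound h
  apply (prod_bound_integrable C).mono'
  · exact (h.continuous.comp (continuous_const.prodMk continuous_id)).aestronglyMeasurable
  · filter_upwards with ξ
    exact hC x ξ

theorem norm_kernel (r : ℝ) : ‖Complex.exp (-(Complex.I * (r:ℂ)))‖ = 1 := by
  have heq : -(Complex.I * (r:ℂ)) = ((-r : ℝ) : ℂ) * Complex.I := by push_cast; ring
  rw [heq, Complex.norm_exp_ofReal_mul_I]

theorem integrand_integrable (x : Eu p × Eu m) (g : (Eu p × Eu m) → ℝ) (hg : Continuous g) :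
    Integrable (fun ξ : Eu p × Eu m => h (x, ξ) * Complex.exp (-(Complex.I * ((g ξ : ℝ) : ℂ)))) := by
  apply (slice_integrable h x).norm.mono'
  · apply Continuous.aestronglyMeasurable
    apply Continuous.mul
    · exact h.continuous.comp (continuous_const.prodMk continuous_id)
    · exact Complex.continuous_exp.comp
        ((continuous_const.mul (Complex.continuous_ofReal.comp hg)).neg)
  · filter_upwards with ξ
    rw [norm_mul, norm_kernel]
    simp

/-- The partial Fourier transform with first dual slot `0`. -/
def Psi : (Eu p × Eu m) → Eu m → ℂ := fun x u =>
  ∫ ξ : Eu p × Eu m, h (x, ξ) * Complex.exp (-(Complex.I * ((⟪u, ξ.2⟫ : ℝ) : ℂ)))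

theorem psi_repr (x : Eu p × Eu m) (u : Eu m) :
    Psi h x u = ∫ ξ₁ : Eu p, ∫ s : Eu m, h (x, (ξ₁, s))
      * Complex.exp (-(Complex.I * ((⟪u, s⟫ : ℝ) : ℂ))) := by
  have hI := integrand_integrable h x (fun ξ => ⟪u, ξ.2⟫)
    (continuous_const.inner continuous_snd)
  rw [Psi]
  rw [MeasureTheory.Measure.volume_eq_prod] at hI ⊢
  exact integral_prod _ hI

theorem psi_bound : ∃ C : ℝ, 0 ≤ C ∧ ∀ (x : Eu p × Eu m) (u : Eu m),
    ‖Psi h x u‖ ≤ C * ((1 + ‖x.1‖) ^ (p + 1))⁻¹ * ((1 + ‖u‖) ^ (m + 1))⁻¹ := by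
  obtain ⟨D, hD0, hD⟩ := inner_decay h
  set cp : ℝ := ∫ ξ₁ : Eu p, ((1 + ‖ξ₁‖) ^ (p + 1))⁻¹ with hcp
  have hcp0 : 0 ≤ cp := integral_nonneg fun t => by positivity
  refine ⟨D * cp, by positivity, ?_⟩
  intro x u
  set α : ℝ := ((1 + ‖x.1‖) ^ (p + 1))⁻¹ with hα
  set γ : ℝ := ((1 + ‖u‖) ^ (m + 1))⁻¹ with hγ
  have hα0 : (0:ℝ) ≤ α := by positivity
  have hγ0 : (0:ℝ) ≤ γ := by positivity
  rw [psi_repr h x u]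
  have hI := integrand_integrable h x (fun ξ => ⟪u, ξ.2⟫)
    (continuous_const.inner continuous_snd)
  rw [MeasureTheory.Measure.volume_eq_prod] at hI
  have hmeas : AEStronglyMeasurable (fun ξ₁ : Eu p => ∫ s : Eu m, h (x, (ξ₁, s))
      * Complex.exp (-(Complex.I * ((⟪u, s⟫ : ℝ) : ℂ)))) volume :=
    hI.aestronglyMeasurable.integral_prod_right'
  have hIn : Integrable (fun ξ₁ : Eu p => ‖∫ s : Eu m, h (x, (ξ₁, s))
      * Complex.exp (-(Complex.I * ((⟪u, s⟫ : ℝ) : ℂ)))‖) := by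
    apply Integrable.mono' ((intOneAdd p).const_mul (D * α * γ))
    · exact hmeas.norm
    · filter_upwards with ξ₁
      rw [norm_norm]
      calc ‖∫ s : Eu m, h (x, (ξ₁, s)) * Complex.exp (-(Complex.I * ((⟪u, s⟫ : ℝ) : ℂ)))‖
          ≤ D * α * ((1 + ‖ξ₁‖) ^ (p + 1))⁻¹ * γ := hD x ξ₁ u
        _ = D * α * γ * ((1 + ‖ξ₁‖) ^ (p + 1))⁻¹ := by ring
  calc ‖∫ ξ₁ : Eu p, ∫ s : Eu m, h (x, (ξ₁, s))
        * Complex.exp (-(Complex.I * ((⟪u, s⟫ : ℝ) : ℂ)))‖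
      ≤ ∫ ξ₁ : Eu p, ‖∫ s : Eu m, h (x, (ξ₁, s))
        * Complex.exp (-(Complex.I * ((⟪u, s⟫ : ℝ) : ℂ)))‖ := norm_integral_le_integral_norm _
    _ ≤ ∫ ξ₁ : Eu p, D * α * γ * ((1 + ‖ξ₁‖) ^ (p + 1))⁻¹ := by
        apply integral_mono hIn ((intOneAdd p).const_mul (D * α * γ))
        intro ξ₁
        calc ‖∫ s : Eu m, h (x, (ξ₁, s)) * Complex.exp (-(Complex.I * ((⟪u, s⟫ : ℝ) : ℂ)))‖
            ≤ D * α * ((1 + ‖ξ₁‖) ^ (p + 1))⁻¹ * γ := hD x ξ₁ u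
          _ = D * α * γ * ((1 + ‖ξ₁‖) ^ (p + 1))⁻¹ := by ring
    _ = D * α * γ * cp := by rw [integral_const_mul]
    _ = D * cp * α * γ := by ring

theorem psi_cont : Continuous (fun q : (Eu p × Eu m) × Eu m => Psi h q.1 q.2) := by
  obtain ⟨C, hC0, hC⟩ := h_bound h
  rw [continuous_iff_continuousAt]
  intro q₀
  apply continuousAt_of_dominated (bound := fun ξ : Eu p × Eu m =>
      C * (((1 + ‖ξ.1‖) ^ (p + 1))⁻¹ * ((1 + ‖ξ.2‖) ^ (m + 1))⁻¹))
  · filter_upwards with q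
    apply Continuous.aestronglyMeasurable
    apply Continuous.mul
    · exact h.continuous.comp (continuous_const.prodMk continuous_id)
    · exact Complex.continuous_exp.comp ((continuous_const.mul
        (Complex.continuous_ofReal.comp (continuous_const.inner continuous_snd))).neg)
  · filter_upwards with q
    filter_upwards with ξ
    rw [norm_mul, norm_kernel, mul_one]
    exact hC q.1 ξ
  · exact prod_bound_integrable C
  · filter_upwards with ξ
    apply Continuous.continuousAt
    apply Continuous.mul
    · exact h.continuous.comp ((continuous_fst).prodMk continuous_const)
    · apply Complex.continuous_exp.comp
      apply Continuous.neg
      apply continuous_const.mul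
      exact Complex.continuous_ofReal.comp ((continuous_snd).inner continuous_const)

theorem psi_repr2 (x : Eu p × Eu m) (u : Eu m) :
    Psi h x u = ∫ s : Eu m, (∫ ξ₁ : Eu p, h (x, (ξ₁, s)))
      * Complex.exp (-(Complex.I * ((⟪u, s⟫ : ℝ) : ℂ))) := by
  have hI := integrand_integrable h x (fun ξ => ⟪u, ξ.2⟫)
    (continuous_const.inner continuous_snd)
  rw [Psi]
  rw [MeasureTheory.Measure.volume_eq_prod] at hI ⊢
  rw [integral_prod_symm _ hI]
  congr 1
  funext s
  exact integral_mul_const (Complex.exp (-(Complex.I * ((⟪u, s⟫ : ℝ) : ℂ))))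
    fun ξ₁ => h (x, (ξ₁, s))

theorem qfun_cont (x : Eu p × Eu m) :
    Continuous (fun t : Eu m => ∫ ξ₁ : Eu p, h (x, (ξ₁, t))) := by
  obtain ⟨C, hC0, hC⟩ := h_bound h
  rw [continuous_iff_continuousAt]
  intro t₀
  apply continuousAt_of_dominated (bound := fun ξ₁ : Eu p => C * ((1 + ‖ξ₁‖) ^ (p + 1))⁻¹)
  · filter_upwards with t
    exact (h.continuous.comp (continuous_const.prodMk
      (continuous_id.prodMk continuous_const))).aestronglyMeasurable
  · filter_upwards with t
    filter_upwards with ξ₁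
    calc ‖h (x, (ξ₁, t))‖ ≤ C * (((1 + ‖ξ₁‖) ^ (p + 1))⁻¹ * ((1 + ‖t‖) ^ (m + 1))⁻¹) := hC x (ξ₁, t)
      _ ≤ C * (((1 + ‖ξ₁‖) ^ (p + 1))⁻¹ * 1) := by
          gcongr
          rw [inv_le_one_iff₀]
          right
          exact one_le_pow₀ (by linarith [norm_nonneg t])
      _ = C * ((1 + ‖ξ₁‖) ^ (p + 1))⁻¹ := by ring
  · exact (intOneAdd p).const_mul C
  · filter_upwards with ξ₁
    exact (h.continuous.comp (continuous_const.prodMk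
      (continuous_const.prodMk continuous_id))).continuousAt

theorem qslice_integrable (x : Eu p × Eu m) (t : Eu m) :
    Integrable (fun ξ₁ : Eu p => h (x, (ξ₁, t))) := by
  obtain ⟨C, hC0, hC⟩ := h_bound h
  apply ((intOneAdd p).const_mul C).mono'
  · exact (h.continuous.comp (continuous_const.prodMk
      (continuous_id.prodMk continuous_const))).aestronglyMeasurable
  · filter_upwards with ξ₁
    calc ‖h (x, (ξ₁, t))‖ ≤ C * (((1 + ‖ξ₁‖) ^ (p + 1))⁻¹ * ((1 + ‖t‖) ^ (m + 1))⁻¹) := hC x (ξ₁, t)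
      _ ≤ C * (((1 + ‖ξ₁‖) ^ (p + 1))⁻¹ * 1) := by
          gcongr
          rw [inv_le_one_iff₀]
          right
          exact one_le_pow₀ (by linarith [norm_nonneg t])
      _ = C * ((1 + ‖ξ₁‖) ^ (p + 1))⁻¹ := by ring

theorem qfun_bound (x : Eu p × Eu m) : ∃ C : ℝ, 0 ≤ C ∧ ∀ t : Eu m,
    ‖∫ ξ₁ : Eu p, h (x, (ξ₁, t))‖ ≤ C * ((1 + ‖t‖) ^ (m + 1))⁻¹ := by
  obtain ⟨C, hC0, hC⟩ := h_bound h
  set cp : ℝ := ∫ ξ₁ : Eu p, ((1 + ‖ξ₁‖) ^ (p + 1))⁻¹ with hcp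
  have hcp0 : 0 ≤ cp := integral_nonneg fun t => by positivity
  refine ⟨C * cp, by positivity, ?_⟩
  intro t
  set γ : ℝ := ((1 + ‖t‖) ^ (m + 1))⁻¹ with hγ
  have hγ0 : (0:ℝ) ≤ γ := by positivity
  calc ‖∫ ξ₁ : Eu p, h (x, (ξ₁, t))‖
      ≤ ∫ ξ₁ : Eu p, ‖h (x, (ξ₁, t))‖ := norm_integral_le_integral_norm _
    _ ≤ ∫ ξ₁ : Eu p, (C * γ) * ((1 + ‖ξ₁‖) ^ (p + 1))⁻¹ := by
        apply integral_mono (qslice_integrable h x t).norm ((intOneAdd p).const_mul (C * γ))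
        intro ξ₁
        calc ‖h (x, (ξ₁, t))‖
            ≤ C * (((1 + ‖ξ₁‖) ^ (p + 1))⁻¹ * γ) := hC x (ξ₁, t)
          _ = (C * γ) * ((1 + ‖ξ₁‖) ^ (p + 1))⁻¹ := by ring
    _ = (C * γ) * cp := by rw [integral_const_mul]
    _ = C * cp * γ := by ring

theorem qfun_integrable (x : Eu p × Eu m) :
    Integrable (fun t : Eu m => ∫ ξ₁ : Eu p, h (x, (ξ₁, t))) := by
  obtain ⟨C, hC0, hC⟩ := qfun_bound h x
  apply ((intOneAdd m).const_mul C).mono'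
  · exact (qfun_cont h x).aestronglyMeasurable
  · filter_upwards with t
    exact hC t

theorem fourier_q_eq (x : Eu p × Eu m) (w : Eu m) :
    FourierTransform.fourier (fun t : Eu m => ∫ ξ₁ : Eu p, h (x, (ξ₁, t))) w
      = Psi h x ((2 * π) • w) := by
  have h2π : (2 * π) ≠ 0 := by positivity
  rw [psi_repr2, kernel_eq]
  congr 1
  rw [smul_smul, inv_mul_cancel₀ h2π, one_smul]

theorem fourier_q_integrable (x : Eu p × Eu m) :
    Integrable (FourierTransform.fourier (fun t : Eu m => ∫ ξ₁ : Eu p, h (x, (ξ₁, t)))) := by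
  obtain ⟨C, hC0, hC⟩ := psi_bound h
  have h2π : (1:ℝ) ≤ 2 * π := by nlinarith [Real.pi_gt_three]
  apply ((intOneAdd m).const_mul (C * ((1 + ‖x.1‖) ^ (p + 1))⁻¹)).mono'
  · have hcont : Continuous fun w : Eu m => Psi h x ((2 * π) • w) :=
      (psi_cont h).comp (continuous_const.prodMk ((continuous_const : Continuous fun _ : Eu m => (2 * π : ℝ)).smul continuous_id))
    apply Continuous.aestronglyMeasurable
    have heq : FourierTransform.fourier (fun t : Eu m => ∫ ξ₁ : Eu p, h (x, (ξ₁, t)))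
        = fun w => Psi h x ((2 * π) • w) := funext fun w => fourier_q_eq h x w
    rw [heq]
    exact hcont
  · filter_upwards with w
    rw [fourier_q_eq h x w]
    calc ‖Psi h x ((2 * π) • w)‖
        ≤ C * ((1 + ‖x.1‖) ^ (p + 1))⁻¹ * ((1 + ‖(2 * π) • w‖) ^ (m + 1))⁻¹ := hC x _
      _ ≤ C * ((1 + ‖x.1‖) ^ (p + 1))⁻¹ * ((1 + ‖w‖) ^ (m + 1))⁻¹ := by
          gcongr
          rw [norm_smul, Real.norm_eq_abs, abs_of_pos (by positivity : (0:ℝ) < 2 * π)]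
          nlinarith [norm_nonneg w]
      _ = C * ((1 + ‖x.1‖) ^ (p + 1))⁻¹ * ((1 + ‖w‖) ^ (m + 1))⁻¹ := rfl

/-- Step D: integral of `Psi` over the dual normal directions via Fourier inversion. -/
theorem inv_step (x : Eu p × Eu m) :
    ∫ u : Eu m, Psi h x u = (((2 * π) ^ m : ℝ) : ℂ)
      * ∫ ξ₁ : Eu p, h (x, (ξ₁, (0 : Eu m))) := by
  set q : Eu m → ℂ := fun t => ∫ ξ₁ : Eu p, h (x, (ξ₁, t)) with hq
  have h2π : (0:ℝ) < 2 * π := by positivity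
  have e1 : ∀ u : Eu m, Psi h x u = FourierTransform.fourier q ((2 * π)⁻¹ • u) := by
    intro u
    rw [psi_repr2, kernel_eq]
  have e2 : ∫ u : Eu m, Psi h x u
      = |(2 * π) ^ (Module.finrank ℝ (Eu m))| • ∫ w : Eu m, FourierTransform.fourier q w := by
    rw [← MeasureTheory.Measure.integral_comp_inv_smul volume (FourierTransform.fourier q) (2 * π)]
    congr 1
    funext u
    exact e1 u
  have e3 : ∫ w : Eu m, FourierTransform.fourier q w
      = FourierTransformInv.fourierInv (FourierTransform.fourier q) 0 := by
    rw [Real.fourierInv_eq]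
    congr 1
    funext w
    simp
  have e4 : FourierTransformInv.fourierInv (FourierTransform.fourier q) 0 = q 0 :=
    (qfun_integrable h x).fourierInv_fourier_eq (fourier_q_integrable h x)
      (qfun_cont h x).continuousAt
  rw [e2, e3, e4, finrank_euclideanSpace_fin, abs_of_pos (by positivity)]
  rw [hq]
  simp [Complex.real_smul]

theorem cov {d : ℕ} (T : Eu d →ₗ[ℝ] Eu d) (hT : IsUnit T) (φ : Eu d → ℂ)
    (hφ : AEStronglyMeasurable φ (volume : Measure (Eu d))) :
    ∫ w : Eu d, φ (T w) = |LinearMap.det T|⁻¹ • ∫ u : Eu d, φ u := by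
  set e : Eu d ≃ₗ[ℝ] Eu d := LinearMap.GeneralLinearGroup.generalLinearEquiv ℝ (Eu d) hT.unit
    with he
  have hecoe : (e : Eu d →ₗ[ℝ] Eu d) = T := by
    rw [he, LinearMap.GeneralLinearGroup.generalLinearEquiv_to_linearMap]
    exact hT.unit_spec
  have hdet : LinearMap.det T ≠ 0 := by
    rw [← hecoe]
    exact (LinearEquiv.isUnit_det' e).ne_zero
  have hmap : Measure.map (⇑T) volume = ENNReal.ofReal |(LinearMap.det T)⁻¹| • volume :=
    Measure.map_linearMap_addHaar_eq_smul_addHaar volume hdet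
  have hTmeas : AEMeasurable (⇑T) (volume : Measure (Eu d)) :=
    T.continuous_of_finiteDimensional.measurable.aemeasurable
  have hφm : AEStronglyMeasurable φ (Measure.map (⇑T) volume) := by
    rw [hmap]
    exact hφ.mono_ac Measure.smul_absolutelyContinuous
  calc ∫ w : Eu d, φ (T w) = ∫ y, φ y ∂(Measure.map (⇑T) volume) :=
        (integral_map hTmeas hφm).symm
    _ = (ENNReal.ofReal |(LinearMap.det T)⁻¹|).toReal • ∫ u : Eu d, φ u := by
        rw [hmap, integral_smul_measure]
    _ = |LinearMap.det T|⁻¹ • ∫ u : Eu d, φ u := by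
        rw [ENNReal.toReal_ofReal (abs_nonneg _), abs_inv]

theorem T_comp {d : ℕ} (k : ℕ) (T : Eu d →ₗ[ℝ] Eu d) (hT : IsUnit T) :
    ∃ K : ℝ, 0 ≤ K ∧ ∀ w : Eu d,
      ((1 + ‖T w‖) ^ k)⁻¹ ≤ K * ((1 + ‖w‖) ^ k)⁻¹ := by
  set S : Eu d →ₗ[ℝ] Eu d := ((hT.unit⁻¹ : _) : Eu d →ₗ[ℝ] Eu d) with hS
  have hST : ∀ w : Eu d, S (T w) = w := by
    intro w
    have h1 : ((hT.unit⁻¹ : _) : Eu d →ₗ[ℝ] Eu d) * ((hT.unit : _) : Eu d →ₗ[ℝ] Eu d) = 1 := by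
      rw [← Units.val_mul]; simp
    have h2 := LinearMap.congr_fun h1 w
    rw [Module.End.mul_apply, Module.End.one_apply, hT.unit_spec] at h2
    exact h2
  set Sc := LinearMap.toContinuousLinearMap S with hSc
  set a : ℝ := max 1 ‖Sc‖ with ha
  have ha1 : (1:ℝ) ≤ a := le_max_left _ _
  have ha0 : (0:ℝ) < a := lt_of_lt_of_le one_pos ha1
  refine ⟨a ^ k, by positivity, ?_⟩
  intro w
  have hw : ‖w‖ ≤ ‖Sc‖ * ‖T w‖ := by
    calc ‖w‖ = ‖Sc (T w)‖ := by rw [hSc]; exact congrArg _ (hST w).symm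
      _ ≤ ‖Sc‖ * ‖T w‖ := Sc.le_opNorm _
  have h1w : 1 + ‖w‖ ≤ a * (1 + ‖T w‖) := by
    have h2 : ‖Sc‖ ≤ a := le_max_right _ _
    have h3 : (0:ℝ) ≤ ‖T w‖ := norm_nonneg _
    nlinarith [norm_nonneg w]
  have hb : (0:ℝ) < (1 + ‖T w‖) ^ k := by positivity
  have hc : (0:ℝ) < (1 + ‖w‖) ^ k := by positivity
  have hpow : (1 + ‖w‖) ^ k ≤ a ^ k * (1 + ‖T w‖) ^ k := by
    rw [← mul_pow]
    exact pow_le_pow_left₀ (by positivity) h1w k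
  rw [show (a ^ k * ((1 + ‖w‖) ^ k)⁻¹ : ℝ) = a ^ k / (1 + ‖w‖) ^ k from
    (div_eq_mul_inv _ _).symm, show (((1 + ‖T w‖) ^ k)⁻¹ : ℝ) = 1 / (1 + ‖T w‖) ^ k from
    (one_div _).symm, div_le_div_iff₀ hb hc]
  linarith

end

end Statement9Aux


open Statement9Aux

set_option maxHeartbeats 2000000 in
/-- Let `p, m ≥ 1`, `n = p + m`, write points of `ℝⁿ` as `x = (x₀, v)`
with `x₀ ∈ ℝᵖ`, `v ∈ ℝᵐ`, and let `g = 1 ⊕ g′` act as the identity on `ℝᵖ` and as `g′` on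
`ℝᵐ`, where `g′ − 1` is invertible (so `gx − x = (0, g′v − v)`).  Then for every Schwartz
`h` on `ℝⁿ×ℝⁿ`:
`lim_{ℏ→0⁺} ℏ^{−m} ∫ ĥ(x, (gx−x)/ℏ) dx
  = ((2π)ᵐ/|det(g′−1)|) ∫∫ h((x₀,0),(ξ₁,0)) dξ₁ dx₀`. -/
theorem statement9 (p m : ℕ) (hp : 1 ≤ p) (hm : 1 ≤ m)
    (g' : EuclideanSpace ℝ (Fin m) →ₗ[ℝ] EuclideanSpace ℝ (Fin m))
    (hg : IsUnit (g' - LinearMap.id))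
    (h : SchwartzMap ((EuclideanSpace ℝ (Fin p) × EuclideanSpace ℝ (Fin m)) ×
          (EuclideanSpace ℝ (Fin p) × EuclideanSpace ℝ (Fin m))) ℂ) :
    Tendsto
      (fun ℏ : ℝ => ((ℏ ^ m : ℝ) : ℂ)⁻¹ *
        ∫ x : EuclideanSpace ℝ (Fin p) × EuclideanSpace ℝ (Fin m),
          fhat2 p m ⇑h x ((0 : EuclideanSpace ℝ (Fin p)), ℏ⁻¹ • (g' x.2 - x.2)))
      (nhdsWithin 0 (Set.Ioi 0))
      (nhds ((((2 * Real.pi) ^ m / |LinearMap.det (g' - LinearMap.id)| : ℝ) : ℂ) *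
        ∫ x₀ : EuclideanSpace ℝ (Fin p), ∫ ξ₁ : EuclideanSpace ℝ (Fin p),
          h ((x₀, (0 : EuclideanSpace ℝ (Fin m))),
             (ξ₁, (0 : EuclideanSpace ℝ (Fin m)))))) := by
  classical
  set T : EuclideanSpace ℝ (Fin m) →ₗ[ℝ] EuclideanSpace ℝ (Fin m) := g' - LinearMap.id with hT
  have hTapp : ∀ v : Eu m, T v = g' v - v := by
    intro v; rw [hT, LinearMap.sub_apply, LinearMap.id_apply]
  have hTcont : Continuous T := T.continuous_of_finiteDimensional
  have hpsi_eq : ∀ (x : Eu p × Eu m) (u : Eu m),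
      fhat2 p m ⇑h x ((0 : Eu p), u) = Psi h x u := by
    intro x u
    rw [fhat2, Psi]
    congr 1
    funext ξ
    have : ⟪((0 : Eu p), u).1, ξ.1⟫ + ⟪((0 : Eu p), u).2, ξ.2⟫ = ⟪u, ξ.2⟫ := by
      rw [show ((0 : Eu p), u).1 = (0 : Eu p) from rfl, inner_zero_left, zero_add]
    rw [this]
  obtain ⟨CP, hCP0, hCP⟩ := psi_bound h
  obtain ⟨K, hK0, hK⟩ := T_comp (m + 1) T hg
  set B : Eu p × Eu m → ℝ := fun z =>
    (CP * K) * (((1 + ‖z.1‖) ^ (p + 1))⁻¹ * ((1 + ‖z.2‖) ^ (m + 1))⁻¹) with hB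
  have hBint : Integrable B := prod_bound_integrable (CP * K)
  have hBd : ∀ (y : Eu m) (z : Eu p × Eu m), ‖Psi h (z.1, y) (T z.2)‖ ≤ B z := by
    intro y z
    calc ‖Psi h (z.1, y) (T z.2)‖
        ≤ CP * ((1 + ‖z.1‖) ^ (p + 1))⁻¹ * ((1 + ‖T z.2‖) ^ (m + 1))⁻¹ := hCP _ _
      _ ≤ CP * ((1 + ‖z.1‖) ^ (p + 1))⁻¹ * (K * ((1 + ‖z.2‖) ^ (m + 1))⁻¹) :=
          mul_le_mul_of_nonneg_left (hK z.2) (by positivity)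
      _ = B z := by rw [hB]; ring
  have hBd2 : ∀ ℏ : ℝ, 0 < ℏ → ℏ < 1 → ∀ z : Eu p × Eu m,
      ‖Psi h z (ℏ⁻¹ • T z.2)‖ ≤ B z := by
    intro ℏ h0 h1 z
    have hinv : (1:ℝ) ≤ ℏ⁻¹ := by
      have h2 : (0:ℝ) < ℏ⁻¹ := inv_pos.2 h0
      nlinarith [mul_inv_cancel₀ (ne_of_gt h0)]
    calc ‖Psi h z (ℏ⁻¹ • T z.2)‖
        ≤ CP * ((1 + ‖z.1‖) ^ (p + 1))⁻¹ * ((1 + ‖ℏ⁻¹ • T z.2‖) ^ (m + 1))⁻¹ := hCP _ _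
      _ ≤ CP * ((1 + ‖z.1‖) ^ (p + 1))⁻¹ * ((1 + ‖T z.2‖) ^ (m + 1))⁻¹ := by
          gcongr
          rw [norm_smul, Real.norm_eq_abs, abs_of_pos (inv_pos.2 h0)]
          nlinarith [norm_nonneg (T z.2)]
      _ ≤ CP * ((1 + ‖z.1‖) ^ (p + 1))⁻¹ * (K * ((1 + ‖z.2‖) ^ (m + 1))⁻¹) :=
          mul_le_mul_of_nonneg_left (hK z.2) (by positivity)
      _ = B z := by rw [hB]; ring
  have hmeas1 : ∀ ℏ : ℝ, Continuous (fun z : Eu p × Eu m => Psi h (z.1, ℏ • z.2) (T z.2)) := by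
    intro ℏ
    exact (psi_cont h).comp ((continuous_fst.prodMk
      ((continuous_const : Continuous fun _ : Eu p × Eu m => ℏ).smul continuous_snd)).prodMk (hTcont.comp continuous_snd))
  have hmeas2 : ∀ c : ℝ, Continuous (fun x : Eu p × Eu m => Psi h x (c • T x.2)) := by
    intro c
    exact (psi_cont h).comp (continuous_id.prodMk
      ((continuous_const : Continuous fun _ : Eu p × Eu m => c).smul (hTcont.comp continuous_snd)))
  have hmeas0 : Continuous (fun z : Eu p × Eu m => Psi h (z.1, (0 : Eu m)) (T z.2)) :=
    (psi_cont h).comp ((continuous_fst.prodMk continuous_const).prodMk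
      (hTcont.comp continuous_snd))
  have hint1 : ∀ ℏ : ℝ, Integrable (fun z : Eu p × Eu m => Psi h (z.1, ℏ • z.2) (T z.2)) :=
    fun ℏ => hBint.mono' (hmeas1 ℏ).aestronglyMeasurable
      (Filter.Eventually.of_forall fun z => hBd _ z)
  have hint0 : Integrable (fun z : Eu p × Eu m => Psi h (z.1, (0 : Eu m)) (T z.2)) :=
    hBint.mono' hmeas0.aestronglyMeasurable
      (Filter.Eventually.of_forall fun z => hBd (0 : Eu m) z)
  have hint2 : ∀ ℏ : ℝ, 0 < ℏ → ℏ < 1 →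
      Integrable (fun x : Eu p × Eu m => Psi h x (ℏ⁻¹ • T x.2)) := by
    intro ℏ h0 h1
    exact hBint.mono' (hmeas2 ℏ⁻¹).aestronglyMeasurable
      (Filter.Eventually.of_forall fun z => hBd2 ℏ h0 h1 z)
  -- Dominated convergence
  have hDCT : Tendsto (fun ℏ : ℝ => ∫ z : Eu p × Eu m, Psi h (z.1, ℏ • z.2) (T z.2))
      (nhdsWithin 0 (Set.Ioi 0))
      (nhds (∫ z : Eu p × Eu m, Psi h (z.1, (0 : Eu m)) (T z.2))) := by
    apply tendsto_integral_filter_of_dominated_convergence B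
    · filter_upwards with ℏ
      exact (hmeas1 ℏ).aestronglyMeasurable
    · filter_upwards with ℏ
      filter_upwards with z
      exact hBd _ z
    · exact hBint
    · filter_upwards with z
      have h1 : Tendsto (fun ℏ : ℝ => ℏ • z.2) (nhds 0) (nhds (0 : Eu m)) :=
        (continuous_id.smul continuous_const).tendsto' (0:ℝ) (0 : Eu m) (zero_smul ℝ z.2)
      have hmap : Tendsto (fun ℏ : ℝ => (((z.1, ℏ • z.2) : Eu p × Eu m), T z.2))
          (nhdsWithin (0:ℝ) (Set.Ioi 0)) (nhds ((z.1, (0 : Eu m)), T z.2)) := by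
        apply Tendsto.mono_left _ nhdsWithin_le_nhds
        exact (tendsto_const_nhds.prodMk_nhds h1).prodMk_nhds tendsto_const_nhds
      exact ((psi_cont h).continuousAt (x := ((z.1, (0 : Eu m)), T z.2))).tendsto.comp hmap
  -- Eventual equality with the original expression
  have hEv : ∀ᶠ ℏ in nhdsWithin (0:ℝ) (Set.Ioi 0),
      (∫ z : Eu p × Eu m, Psi h (z.1, ℏ • z.2) (T z.2))
        = ((ℏ ^ m : ℝ) : ℂ)⁻¹ *
            ∫ x : Eu p × Eu m, fhat2 p m ⇑h x ((0 : Eu p), ℏ⁻¹ • (g' x.2 - x.2)) := by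
    filter_upwards [Ioo_mem_nhdsGT_of_mem (Set.mem_Ico.2 ⟨le_refl (0:ℝ), zero_lt_one⟩)]
      with ℏ hℏ
    obtain ⟨h0, h1⟩ := hℏ
    have e0 : (fun x : Eu p × Eu m => fhat2 p m ⇑h x ((0 : Eu p), ℏ⁻¹ • (g' x.2 - x.2)))
        = fun x : Eu p × Eu m => Psi h x (ℏ⁻¹ • T x.2) := by
      funext x
      rw [hpsi_eq x (ℏ⁻¹ • (g' x.2 - x.2)), hTapp]
    rw [e0]
    have hinner : ∀ x₀ : Eu p, (∫ w : Eu m, Psi h (x₀, ℏ • w) (T w))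
        = |(ℏ ^ m)⁻¹| • ∫ v : Eu m, Psi h (x₀, v) (ℏ⁻¹ • T v) := by
      intro x₀
      calc (∫ w : Eu m, Psi h (x₀, ℏ • w) (T w))
          = ∫ w : Eu m, Psi h (x₀, ℏ • w) (ℏ⁻¹ • T (ℏ • w)) := by
            congr 1
            funext w
            rw [_root_.map_smul, smul_smul, inv_mul_cancel₀ (ne_of_gt h0), one_smul]
        _ = |(ℏ ^ m)⁻¹| • ∫ v : Eu m, Psi h (x₀, v) (ℏ⁻¹ • T v) := by
            have hcs := MeasureTheory.Measure.integral_comp_smul volume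
              (fun v : Eu m => Psi h (x₀, v) (ℏ⁻¹ • T v)) ℏ
            rw [finrank_euclideanSpace_fin] at hcs
            exact hcs
    have hI1 := hint1 ℏ
    have hI2 := hint2 ℏ h0 h1
    rw [MeasureTheory.Measure.volume_eq_prod] at hI1 hI2 ⊢
    rw [integral_prod _ hI1, integral_prod _ hI2]
    calc (∫ x₀ : Eu p, ∫ w : Eu m, Psi h (x₀, ℏ • w) (T w))
        = ∫ x₀ : Eu p, |(ℏ ^ m)⁻¹| • ∫ v : Eu m, Psi h (x₀, v) (ℏ⁻¹ • T v) := by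
          congr 1
          funext x₀
          exact hinner x₀
      _ = |(ℏ ^ m)⁻¹| • ∫ x₀ : Eu p, ∫ v : Eu m, Psi h (x₀, v) (ℏ⁻¹ • T v) :=
          integral_smul _ _
      _ = ((ℏ ^ m : ℝ) : ℂ)⁻¹ * ∫ x₀ : Eu p, ∫ v : Eu m, Psi h (x₀, v) (ℏ⁻¹ • T v) := by
          rw [abs_of_pos (by positivity), Complex.real_smul, Complex.ofReal_inv,
            Complex.ofReal_pow]
  -- identification of the limit value
  have hval : (∫ z : Eu p × Eu m, Psi h (z.1, (0 : Eu m)) (T z.2))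
      = (((2 * Real.pi) ^ m / |LinearMap.det T| : ℝ) : ℂ) *
          ∫ x₀ : Eu p, ∫ ξ₁ : Eu p, h ((x₀, (0 : Eu m)), (ξ₁, (0 : Eu m))) := by
    have hI0 := hint0
    rw [MeasureTheory.Measure.volume_eq_prod] at hI0 ⊢
    rw [integral_prod _ hI0]
    have hx : ∀ x₀ : Eu p, (∫ w : Eu m, Psi h (x₀, (0 : Eu m)) (T w))
        = (((2 * Real.pi) ^ m / |LinearMap.det T| : ℝ) : ℂ) *
            ∫ ξ₁ : Eu p, h ((x₀, (0 : Eu m)), (ξ₁, (0 : Eu m))) := by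
      intro x₀
      have hφm : AEStronglyMeasurable (fun u : Eu m => Psi h ((x₀, (0 : Eu m))) u)
          (volume : Measure (Eu m)) :=
        ((psi_cont h).comp (continuous_const.prodMk continuous_id)).aestronglyMeasurable
      rw [cov T hg (fun u : Eu m => Psi h ((x₀, (0 : Eu m))) u) hφm,
        inv_step h ((x₀, (0 : Eu m)))]
      rw [Complex.real_smul]
      push_cast
      ring
    calc (∫ x₀ : Eu p, ∫ w : Eu m, Psi h (x₀, (0 : Eu m)) (T w))
        = ∫ x₀ : Eu p, (((2 * Real.pi) ^ m / |LinearMap.det T| : ℝ) : ℂ) *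
            ∫ ξ₁ : Eu p, h ((x₀, (0 : Eu m)), (ξ₁, (0 : Eu m))) := by
          congr 1
          funext x₀
          exact hx x₀
      _ = (((2 * Real.pi) ^ m / |LinearMap.det T| : ℝ) : ℂ) *
            ∫ x₀ : Eu p, ∫ ξ₁ : Eu p, h ((x₀, (0 : Eu m)), (ξ₁, (0 : Eu m))) :=
          integral_const_mul _ _
  have hfinal := hDCT.congr' hEv
  rwa [hval] at hfinal
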